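/- For a univariate rational function r(x) = x^n p(x)/q(x), where p and q are coprime polynomials with p(0) ≠ 0 and q(0) ≠ 0 and n ∈ ℤ, the degree defined via valuations satisfies deg(r) = max(-n, n + deg(p) - deg(q)), where deg(p), deg(q) denote the usual polynomial degrees. -/

import Mathlib

/-- The minimal weight `min_{k ∈ supp f} ε * k` of a univariate polynomial `f`.  For a
polynomial `f` with `f(0) ≠ 0`, this is the valuation in `p` of the expansion of
`f(p^ε x)` as a series in `p` with polynomial coefficients (the coefficients
`a_k p^{εk} x^k` involve distinct powers of `x`, so no cancellation occurs). -/
noncomputable def pValEps (ε : ℝ) (f : Polynomial ℂ) : ℝ :=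
  if h : f.support.Nonempty then f.support.inf' h (fun k => ε * (k : ℝ)) else 0

lemma pValEps_of_nonneg {ε : ℝ} (hε : 0 ≤ ε) {f : Polynomial ℂ} (hf : f.eval 0 ≠ 0) :
    pValEps ε f = 0 := by
  have h0 : (0:ℕ) ∈ f.support := by
    rw [Polynomial.mem_support_iff, Polynomial.coeff_zero_eq_eval_zero]; exact hf
  have hne : f.support.Nonempty := ⟨0, h0⟩
  rw [pValEps, dif_pos hne]
  apply le_antisymm
  · exact (Finset.inf'_le (fun k : ℕ => ε * (k : ℝ)) h0).trans (by simp)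
  · apply Finset.le_inf'
    intro k hk
    positivity

lemma pValEps_of_nonpos {ε : ℝ} (hε : ε ≤ 0) {f : Polynomial ℂ} (hf : f ≠ 0) :
    pValEps ε f = ε * f.natDegree := by
  have hd : f.natDegree ∈ f.support := Polynomial.natDegree_mem_support_of_nonzero hf
  have hne : f.support.Nonempty := ⟨_, hd⟩
  rw [pValEps, dif_pos hne]
  apply le_antisymm
  · exact Finset.inf'_le (fun k : ℕ => ε * (k : ℝ)) hd
  · apply Finset.le_inf'
    intro k hk
    have : (k : ℝ) ≤ f.natDegree := by
      exact_mod_cast Polynomial.le_natDegree_of_mem_supp k hk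
    exact mul_le_mul_of_nonpos_left this hε

/-- For a univariate rational function `r(x) = x^m · P(x)/Q(x)` with `P, Q` coprime
polynomials, `P(0) ≠ 0 ≠ Q(0)` and `m ∈ ℤ`, the valuation of `r(p^ε x)` in `p` is
`deg_ε(r) = ε·m + pValEps ε P - pValEps ε Q`, and the degree
`deg(r) = -inf_{ε ≠ 0} deg_ε(r)/|ε|` equals `max(-m, m + deg P - deg Q)`,
with `deg P`, `deg Q` the usual polynomial degrees. -/
theorem rational_degree_formula (m : ℤ) (P Q : Polynomial ℂ) (hP : P ≠ 0) (hQ : Q ≠ 0)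
    (hcop : IsCoprime P Q) (hP0 : P.eval 0 ≠ 0) (hQ0 : Q.eval 0 ≠ 0) :
    -sInf {d : ℝ | ∃ ε : ℝ, ε ≠ 0 ∧
        d = (ε * (m : ℝ) + pValEps ε P - pValEps ε Q) / |ε|}
      = max (-(m : ℝ)) ((m : ℝ) + (P.natDegree : ℝ) - (Q.natDegree : ℝ)) := by
  have hSet : {d : ℝ | ∃ ε : ℝ, ε ≠ 0 ∧
        d = (ε * (m : ℝ) + pValEps ε P - pValEps ε Q) / |ε|} =
      {(m : ℝ), -((m : ℝ) + (P.natDegree : ℝ) - (Q.natDegree : ℝ))} := by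
    ext d
    simp only [Set.mem_setOf_eq, Set.mem_insert_iff, Set.mem_singleton_iff]
    constructor
    · rintro ⟨ε, hε, rfl⟩
      rcases hε.lt_or_gt with h | h
      · right
        rw [pValEps_of_nonpos h.le hP, pValEps_of_nonpos h.le hQ, abs_of_neg h,
          div_eq_iff (neg_ne_zero.mpr hε)]
        ring
      · left
        rw [pValEps_of_nonneg h.le hP0, pValEps_of_nonneg h.le hQ0, abs_of_pos h, div_eq_iff hε]
        ring
    · rintro (rfl | rfl)
      · exact ⟨1, one_ne_zero, by
          rw [pValEps_of_nonneg zero_le_one hP0, pValEps_of_nonneg zero_le_one hQ0]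
          norm_num⟩
      · refine ⟨-1, by norm_num, ?_⟩
        rw [pValEps_of_nonpos (by norm_num) hP, pValEps_of_nonpos (by norm_num) hQ]
        norm_num
        ring
  rw [hSet, csInf_pair]
  rcases le_total ((m:ℝ)) (-((m : ℝ) + (P.natDegree : ℝ) - (Q.natDegree : ℝ))) with h | h
  · rw [min_eq_left h, max_eq_left (by linarith)]
  · rw [min_eq_right h, max_eq_right (by linarith)]
    ring
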